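/- Let u : ℕ → ℝ be a nonnegative sequence, let δ > 0 and β > 0, let γ : ℕ → ℝ be a nonnegative sequence with ∑_n γ(n) = ∞, let α : ℕ → ℝ be a sequence whose series of partial sums ∑_{n=0}^{m} α(n) converges to a finite limit as m → ∞, and let c : ℕ → ℝ be a sequence with c(n) → 0. Assume that for every n: (i) if u(n) > δ then u(n+1) ≤ u(n) − (β·γ(n) − α(n)); and (ii) if u(n) ≤ δ then u(n+1)² ≤ u(n)² + c(n). Then there exists n₀ such that u(n) ≤ 3δ for all n ≥ n₀. -/

import Mathlib

open Filter

/-- The deterministic sequence lemma of the proof outline: if `u` is nonnegative,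
drifts down by `β·γ(n) − α(n)` whenever `u(n) > δ`, and satisfies
`u(n+1)² ≤ u(n)² + c(n)` whenever `u(n) ≤ δ`, where `∑ γ(n) = ∞`, the partial sums
of `α` converge, and `c(n) → 0`, then eventually `u(n) ≤ 3δ`. -/
theorem eventually_le_three_delta
    (u : ℕ → ℝ) (hu : ∀ n, 0 ≤ u n)
    (δ β : ℝ) (hδ : 0 < δ) (hβ : 0 < β)
    (γ : ℕ → ℝ) (hγ : ∀ n, 0 ≤ γ n)
    (hγdiv : Tendsto (fun m => ∑ n ∈ Finset.range m, γ n) atTop atTop)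
    (α : ℕ → ℝ)
    (hα : ∃ l : ℝ, Tendsto (fun m => ∑ n ∈ Finset.range m, α n) atTop (nhds l))
    (c : ℕ → ℝ) (hc : Tendsto c atTop (nhds 0))
    (h1 : ∀ n, δ < u n → u (n + 1) ≤ u n - (β * γ n - α n))
    (h2 : ∀ n, u n ≤ δ → u (n + 1) ^ 2 ≤ u n ^ 2 + c n) :
    ∃ n₀ : ℕ, ∀ n ≥ n₀, u n ≤ 3 * δ := by
  set A : ℕ → ℝ := fun m => ∑ n ∈ Finset.range m, α n with hAdef
  set G : ℕ → ℝ := fun m => ∑ n ∈ Finset.range m, γ n with hGdef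
  obtain ⟨l, hl⟩ := hα
  have hAcauchy : CauchySeq A := hl.cauchySeq
  rw [Metric.cauchySeq_iff] at hAcauchy
  obtain ⟨N₁, hN₁⟩ := hAcauchy δ hδ
  obtain ⟨N₂, hN₂⟩ := Metric.tendsto_atTop.mp hc (3 * δ ^ 2) (by positivity)
  set N := max N₁ N₂ with hNdef
  -- Claim 1: there exists n₁ ≥ N with u n₁ ≤ δ
  have claim1 : ∃ n₁, N ≤ n₁ ∧ u n₁ ≤ δ := by
    by_contra h
    push_neg at h
    have key : ∀ m, N ≤ m → u m ≤ u N - β * (G m - G N) + (A m - A N) := by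
      intro m hm
      induction m, hm using Nat.le_induction with
      | base => simp
      | succ m hm ih =>
        have hum : δ < u m := h m hm
        have hstep := h1 m hum
        have hGm : G (m + 1) = G m + γ m := Finset.sum_range_succ _ _
        have hAm : A (m + 1) = A m + α m := Finset.sum_range_succ _ _
        have hmul : β * (G (m + 1) - G N) = β * (G m - G N) + β * γ m := by
          rw [hGm]; ring
        rw [hAm]
        linarith
    obtain ⟨m, hm1, hm2⟩ :=
      ((hγdiv.eventually_ge_atTop (G N + (u N + δ) / β + 1)).and
        (eventually_ge_atTop N)).exists
    have hkey := key m hm2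
    have h3 : (u N + δ) / β + 1 ≤ G m - G N := by
      have : G N + (u N + δ) / β + 1 ≤ G m := hm1
      linarith
    have h4 : β * ((u N + δ) / β + 1) ≤ β * (G m - G N) :=
      mul_le_mul_of_nonneg_left h3 hβ.le
    have h5 : β * ((u N + δ) / β + 1) = u N + δ + β := by
      field_simp
    have hd := hN₁ m (le_trans (le_max_left _ _) hm2) N (le_max_left _ _)
    rw [Real.dist_eq] at hd
    have habs := abs_lt.mp hd
    have := hu m
    linarith [habs.1, habs.2]
  obtain ⟨n₁, hn₁N, hun₁⟩ := claim1
  refine ⟨n₁, ?_⟩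
  have inv : ∀ n, n₁ ≤ n →
      ∃ m, n₁ ≤ m ∧ m ≤ n ∧ u m ≤ 2 * δ ∧ u n ≤ u m + (A n - A m) := by
    intro n hn
    induction n, hn using Nat.le_induction with
    | base => exact ⟨n₁, le_rfl, le_rfl, by linarith, by simp⟩
    | succ n hn ih =>
      obtain ⟨m, hm1, hm2, hm3, hm4⟩ := ih
      by_cases hcase : u n ≤ δ
      · refine ⟨n + 1, le_trans hm1 (le_trans hm2 (Nat.le_succ n)), le_rfl, ?_, by simp⟩
        have hcn : c n ≤ 3 * δ ^ 2 := by
          have := hN₂ n (le_trans (le_max_right _ _) (hn₁N.trans hn))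
          rw [Real.dist_eq, sub_zero] at this
          exact le_of_lt (lt_of_abs_lt this)
        have hsq := h2 n hcase
        nlinarith [hu (n + 1), hu n, hδ]
      · push_neg at hcase
        have hstep := h1 n hcase
        have hAs : A (n + 1) = A n + α n := Finset.sum_range_succ _ _
        have hγn : 0 ≤ β * γ n := mul_nonneg hβ.le (hγ n)
        refine ⟨m, hm1, le_trans hm2 (Nat.le_succ n), hm3, ?_⟩
        rw [hAs]
        linarith
  intro n hn
  obtain ⟨m, hm1, hm2, hm3, hm4⟩ := inv n hn
  have hd := hN₁ n (le_trans (le_max_left _ _) (hn₁N.trans hn)) m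
    (le_trans (le_max_left _ _) (hn₁N.trans hm1))
  rw [Real.dist_eq] at hd
  have habs := abs_lt.mp hd
  linarith [habs.1, habs.2]
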